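/- Let r be even, k ≥ 0, p coprime to r, and u_n = e^{πi·p·n²/r} the Chu sequence of length r (extended periodically). For any shift s with s ≢ 0 mod r, the periodic autocorrelation of u over one period of length r vanishes: Σ_{n=0}^{r-1} u_n · conj(u_{n+s}) = 0. -/

import Mathlib

open Finset Complex

/-- The Chu sequence `u_n = e^{πi·p·n²/r}` of length `r` (`r` even, `p` coprime to `r`)
is perfect: its periodic autocorrelation vanishes at every off-peak shift. -/
theorem chu_sequence_perfect (r p : ℕ) (hr : Even r) (hr0 : 0 < r)
    (hp : Nat.Coprime p r) (s : ℕ) (hs : ¬ r ∣ s) :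
    ∑ n ∈ range r,
      Complex.exp (Real.pi * Complex.I * p * (n : ℂ) ^ 2 / r) *
        (starRingEnd ℂ) (Complex.exp
          (Real.pi * Complex.I * p * (((n + s) % r : ℕ) : ℂ) ^ 2 / r)) = 0 := by
  have hrC : (r : ℂ) ≠ 0 := Nat.cast_ne_zero.mpr hr0.ne'
  have hπ : (Real.pi : ℂ) ≠ 0 := Complex.ofReal_ne_zero.mpr Real.pi_ne_zero
  obtain ⟨t, ht⟩ := hr
  -- periodicity of m ↦ exp(πi p m²/r)
  have hper : ∀ m : ℕ,
      Complex.exp (Real.pi * Complex.I * p * ((m % r : ℕ) : ℂ) ^ 2 / r)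
        = Complex.exp (Real.pi * Complex.I * p * (m : ℂ) ^ 2 / r) := by
    intro m
    set q := m / r with hq
    set a := m % r with ha
    have hm : (m : ℂ) = r * q + a := by
      rw [← Nat.div_add_mod m r]; push_cast [← hq, ← ha]; ring
    have key : Real.pi * Complex.I * p * (m : ℂ) ^ 2 / r
        = Real.pi * Complex.I * p * (a : ℂ) ^ 2 / r
          + ((p * (t * q ^ 2 + q * a) : ℕ) : ℤ) * (2 * Real.pi * Complex.I) := by
      field_simp [hm]
      push_cast [ht]
      rw [hm, ht]; push_cast; ring
    rw [key, Complex.exp_add, Complex.exp_int_mul_two_pi_mul_I, mul_one]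
  -- rewrite each summand as c * w ^ n
  set w : ℂ := Complex.exp (-(2 * Real.pi * Complex.I * p * s / r)) with hw
  set c : ℂ := Complex.exp (-(Real.pi * Complex.I * p * (s : ℂ) ^ 2 / r)) with hc
  have hterm : ∀ n : ℕ,
      Complex.exp (Real.pi * Complex.I * p * (n : ℂ) ^ 2 / r) *
        (starRingEnd ℂ) (Complex.exp
          (Real.pi * Complex.I * p * (((n + s) % r : ℕ) : ℂ) ^ 2 / r)) = c * w ^ n := by
    intro n
    rw [hper (n + s), ← Complex.exp_conj]
    rw [← Complex.exp_add, hc, hw, ← Complex.exp_nat_mul, ← Complex.exp_add]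
    congr 1
    have : (starRingEnd ℂ) (Real.pi * Complex.I * p * ((n + s : ℕ) : ℂ) ^ 2 / r)
        = -(Real.pi * Complex.I * p * ((n + s : ℕ) : ℂ) ^ 2 / r) := by
      simp only [map_div₀, map_mul, map_pow, Complex.conj_I, Complex.conj_ofReal,
        Complex.conj_natCast]
      ring
    rw [this]
    push_cast
    field_simp
    ring
  rw [Finset.sum_congr rfl fun n _ => hterm n, ← Finset.mul_sum]
  have hw1 : w ≠ 1 := by
    intro h
    rw [hw, Complex.exp_eq_one_iff] at h
    obtain ⟨k, hk⟩ := h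
    have hIk : -(((p : ℂ) * s) / r) = (k : ℂ) := by
      have h2 : (2 : ℂ) ≠ 0 := two_ne_zero
      field_simp at hk ⊢
      have := hk
      -- cancel π and I
      apply mul_right_cancel₀ Complex.I_ne_zero
      apply mul_right_cancel₀ hπ
      apply mul_left_cancel₀ h2
      ring_nf
      ring_nf at this
      linear_combination (2 * Complex.I * (Real.pi : ℂ)) * this
    have : ((p * s : ℕ) : ℂ) = ((-k * r : ℤ) : ℂ) := by
      push_cast
      field_simp at hIk
      linear_combination -hIk
    have hZ : ((p * s : ℕ) : ℤ) = -k * r := by exact_mod_cast this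
    have hdvd : (r : ℤ) ∣ ((p * s : ℕ) : ℤ) := ⟨-k, by linarith [hZ]⟩
    have : r ∣ p * s := by exact_mod_cast hdvd
    exact hs (hp.symm.dvd_of_dvd_mul_left this)
  rw [geom_sum_eq hw1]
  have hwr : w ^ r = 1 := by
    rw [hw, ← Complex.exp_nat_mul]
    have : (r : ℂ) * -(2 * Real.pi * Complex.I * p * s / r)
        = ((-(p * s : ℕ) : ℤ) : ℂ) * (2 * Real.pi * Complex.I) := by
      push_cast; field_simp
    rw [this, Complex.exp_int_mul_two_pi_mul_I]
  rw [hwr, sub_self, zero_div, mul_zero]
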